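/- Suboptimality of general assignments (Lemma 1): Let g be a normalized, monotone, submodular set function on a finite ground set Ω partitioned into nonempty pairwise-disjoint blocks U_1, …, U_n. Let X^d = {x^d_1, …, x^d_n} be any assignment with x^d_i ∈ U_i, and let X* be any set containing at most one element of each block (in particular a maximizer of g over such sets). Then g(X*) ≤ 2·g(X^d) + Σ_{i=1}^{n} γ^gen_i(g, x^d_i, X^d_{1:i−1}), where γ^gen_i(g, x, A) := max_{x'∈U_i} g(x'|A) − g(x|A) and X^d_{1:i−1} := {x^d_1, …, x^d_{i−1}}. -/

import Mathlib

open Finset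

/-- Marginal gain `g(C|A) = g(A ∪ C) − g(A)`. -/
def marg {Ω : Type*} [DecidableEq Ω] (g : Finset Ω → ℝ) (C A : Finset Ω) : ℝ :=
  g (A ∪ C) - g A

/-- suboptimality of general assignments (Lemma 1). -/
theorem suboptimality_of_general_assignments
    {Ω : Type*} [Fintype Ω] [DecidableEq Ω]
    (g : Finset Ω → ℝ)
    (hnorm : g ∅ = 0)
    (hmono : ∀ ⦃A B : Finset Ω⦄, B ⊆ A → g B ≤ g A)
    (hsub : ∀ ⦃A B C : Finset Ω⦄, B ⊆ A → Disjoint A C →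
      g (A ∪ C) - g A ≤ g (B ∪ C) - g B)
    (n : ℕ) (U : Fin n → Finset Ω)
    (hUne : ∀ i, (U i).Nonempty)
    (hUdisj : ∀ i j, i ≠ j → Disjoint (U i) (U j))
    (hUcover : ∀ x : Ω, ∃ i, x ∈ U i)
    (xd : Fin n → Ω) (hxd : ∀ i, xd i ∈ U i)
    (Xstar : Finset Ω) (hXstar : ∀ i, (Xstar ∩ U i).card ≤ 1) :
    g Xstar ≤ 2 * g (Finset.image xd Finset.univ)
      + ∑ i : Fin n,
          ((U i).sup' (hUne i)
              (fun x => marg g {x} (Finset.image xd (Finset.univ.filter (· < i))))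
            - marg g {xd i} (Finset.image xd (Finset.univ.filter (· < i)))) := by
  classical
  set Xd : Finset Ω := Finset.image xd Finset.univ with hXdDef
  -- prefix sets of the assignment
  let A : Fin n → Finset Ω := fun i => Finset.image xd (Finset.univ.filter (· < i))
  let S : Fin n → ℝ := fun i => (U i).sup' (hUne i) (fun x => marg g {x} (A i))
  -- ℕ-indexed prefix values
  let h : ℕ → ℝ := fun k =>
    g (Finset.image xd (Finset.univ.filter (fun j : Fin n => (j : ℕ) < k)))
  have hAeq : ∀ (k : ℕ) (hk : k < n),
      A ⟨k, hk⟩ = Finset.image xd (Finset.univ.filter (fun j : Fin n => (j : ℕ) < k)) := by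
    intro k hk
    have hf : (Finset.univ.filter (· < (⟨k, hk⟩ : Fin n)))
        = Finset.univ.filter (fun j : Fin n => (j : ℕ) < k) := by
      ext j; simp [Fin.lt_def]
    simp only [A, hf]
  have hstep : ∀ (k : ℕ) (hk : k < n),
      h (k + 1) - h k = marg g {xd ⟨k, hk⟩} (A ⟨k, hk⟩) := by
    intro k hk
    have hfil : (Finset.univ.filter (fun j : Fin n => (j : ℕ) < k + 1))
        = insert ⟨k, hk⟩ (Finset.univ.filter (fun j : Fin n => (j : ℕ) < k)) := by
      ext j
      simp [Nat.lt_succ_iff_lt_or_eq, Fin.ext_iff, or_comm]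
      exact Nat.le_iff_lt_or_eq.trans or_comm
    simp only [h, marg, hAeq k hk, hfil, Finset.image_insert]
    rw [Finset.union_comm, ← Finset.insert_eq]
  -- sum of marginal gains of xd telescopes to g Xd
  let M : ℕ → ℝ := fun k => h (k + 1) - h k
  have hsum_marg : ∑ i : Fin n, marg g {xd i} (A i) = g Xd := by
    have h1 : ∑ i : Fin n, marg g {xd i} (A i) = ∑ k ∈ Finset.range n, M k := by
      rw [← Fin.sum_univ_eq_sum_range]
      refine Finset.sum_congr rfl fun i _ => ?_
      exact (hstep i i.isLt).symm
    have h2 : ∑ k ∈ Finset.range n, M k = h n - h 0 :=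
      Finset.sum_range_sub h n
    have h3 : h n = g Xd := by
      have : (Finset.univ.filter (fun j : Fin n => (j : ℕ) < n)) = Finset.univ := by
        ext j; simp [j.isLt]
      simp [h, this, hXdDef]
    have h4 : h 0 = 0 := by
      have : (Finset.univ.filter (fun j : Fin n => (j : ℕ) < 0)) = ∅ := by
        ext j; simp
      simp [h, this, hnorm]
    rw [h1, h2, h3, h4, sub_zero]
  -- the growing sets including Xstar elements
  let C : ℕ → Finset Ω := fun k =>
    Xd ∪ Xstar.filter (fun x => ∃ i : Fin n, x ∈ U i ∧ (i : ℕ) < k)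
  have hC0 : C 0 = Xd := by
    have : Xstar.filter (fun x => ∃ i : Fin n, x ∈ U i ∧ (i : ℕ) < 0) = ∅ := by
      ext x; simp
    simp [C, this]
  have hCn : C n = Xd ∪ Xstar := by
    have : Xstar.filter (fun x => ∃ i : Fin n, x ∈ U i ∧ (i : ℕ) < n) = Xstar := by
      ext x
      simp only [Finset.mem_filter, and_iff_left_iff_imp]
      intro _
      obtain ⟨i, hi⟩ := hUcover x
      exact ⟨i, hi, i.isLt⟩
    simp only [C]
    rw [this]
  have hSnonneg : ∀ (k : ℕ) (hk : k < n), (0 : ℝ) ≤ S ⟨k, hk⟩ := by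
    intro k hk
    have h1 : (0 : ℝ) ≤ marg g {xd ⟨k, hk⟩} (A ⟨k, hk⟩) := by
      have := hmono (Finset.subset_union_left : A ⟨k, hk⟩ ⊆ A ⟨k, hk⟩ ∪ {xd ⟨k, hk⟩})
      simp only [marg]
      linarith
    exact le_trans h1 (Finset.le_sup' (fun x => marg g {x} (A ⟨k, hk⟩)) (hxd ⟨k, hk⟩))
  have hCstep : ∀ (k : ℕ) (hk : k < n), g (C (k + 1)) - g (C k) ≤ S ⟨k, hk⟩ := by
    intro k hk
    set kk : Fin n := ⟨k, hk⟩ with hkk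
    have key : ∀ x, (∃ i : Fin n, x ∈ U i ∧ (i : ℕ) < k + 1) ↔
        ((∃ i : Fin n, x ∈ U i ∧ (i : ℕ) < k) ∨ x ∈ U kk) := by
      intro x
      constructor
      · rintro ⟨i, hi, hlt⟩
        rcases Nat.lt_succ_iff_lt_or_eq.1 hlt with h' | h'
        · exact Or.inl ⟨i, hi, h'⟩
        · right; have : i = kk := Fin.ext h'; rwa [this] at hi
      · rintro (⟨i, hi, hlt⟩ | hx)
        · exact ⟨i, hi, hlt.trans (Nat.lt_succ_self k)⟩
        · exact ⟨kk, hx, Nat.lt_succ_self k⟩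
    have hCsucc : C (k + 1) = C k ∪ (Xstar ∩ U kk) := by
      ext x
      simp only [C, Finset.mem_union, Finset.mem_filter, Finset.mem_inter, key]
      constructor
      · rintro (hx | ⟨hxs, (h1 | h2)⟩)
        · exact Or.inl (Or.inl hx)
        · exact Or.inl (Or.inr ⟨hxs, h1⟩)
        · exact Or.inr ⟨hxs, h2⟩
      · rintro ((hx | ⟨hxs, h1⟩) | ⟨hxs, h2⟩)
        · exact Or.inl hx
        · exact Or.inr ⟨hxs, Or.inl h1⟩
        · exact Or.inr ⟨hxs, Or.inr h2⟩
    rcases (Xstar ∩ U kk).eq_empty_or_nonempty with hemp | hne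
    · rw [hCsucc, hemp, Finset.union_empty]
      have := hSnonneg k hk
      linarith
    · have hcard : (Xstar ∩ U kk).card = 1 :=
        le_antisymm (hXstar kk) (Finset.card_pos.2 hne)
      obtain ⟨s, hs⟩ := Finset.card_eq_one.1 hcard
      have hsmem : s ∈ Xstar ∩ U kk := by rw [hs]; exact Finset.mem_singleton_self s
      have hsU : s ∈ U kk := (Finset.mem_inter.1 hsmem).2
      rw [hCsucc, hs]
      by_cases hsC : s ∈ C k
      · rw [Finset.union_eq_left.2 (Finset.singleton_subset_iff.2 hsC)]
        have := hSnonneg k hk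
        linarith
      · have hdisj : Disjoint (C k) {s} := Finset.disjoint_singleton_right.2 hsC
        have hAsub : A kk ⊆ C k := by
          refine subset_trans ?_ (Finset.subset_union_left)
          exact Finset.image_subset_image (Finset.filter_subset _ _)
        have hbd := hsub hAsub hdisj
        refine le_trans hbd ?_
        exact Finset.le_sup' (fun x => marg g {x} (A kk)) hsU
  -- ℕ-indexed version of S
  let S' : ℕ → ℝ := fun k => if hk : k < n then S ⟨k, hk⟩ else 0
  have hSsum : ∑ i : Fin n, S i = ∑ k ∈ Finset.range n, S' k := by
    rw [← Fin.sum_univ_eq_sum_range]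
    refine Finset.sum_congr rfl fun i _ => ?_
    simp [S', i.isLt]
  have hmain : g (Xd ∪ Xstar) - g Xd ≤ ∑ i : Fin n, S i := by
    have h1 : ∑ k ∈ Finset.range n, (g (C (k + 1)) - g (C k)) = g (C n) - g (C 0) :=
      Finset.sum_range_sub (fun k => g (C k)) n
    have h2 : ∑ k ∈ Finset.range n, (g (C (k + 1)) - g (C k))
        ≤ ∑ k ∈ Finset.range n, S' k := by
      refine Finset.sum_le_sum fun k hk => ?_
      have hkn : k < n := Finset.mem_range.1 hk
      simpa [S', hkn] using hCstep k hkn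
    rw [h1, hC0, hCn] at h2
    rw [hSsum]
    exact h2
  have hXle : g Xstar ≤ g (Xd ∪ Xstar) := hmono Finset.subset_union_right
  have hsplit : ∑ i : Fin n,
      ((U i).sup' (hUne i) (fun x => marg g {x} (Finset.image xd (Finset.univ.filter (· < i))))
        - marg g {xd i} (Finset.image xd (Finset.univ.filter (· < i))))
      = ∑ i : Fin n, S i - ∑ i : Fin n, marg g {xd i} (A i) := by
    rw [← Finset.sum_sub_distrib]
  linarith [hsplit, hsum_marg, hmain, hXle]
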